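/- arXiv:1805.08741 — 2 statements merged into one kernel-verified Lean document; each statement's English description precedes it below -/
import Mathlib

section
/- Let X be an infinite-dimensional complex Banach space, T a bounded linear operator on X, and n ≥ 1 an integer. Then 0 is not an accumulation point of the Fredholm spectrum σ_F(T) if and only if 0 is not an accumulation point of σ_F(T^n). (That is, T is pseudo-B-Fredholm if and only if T^n is pseudo-B-Fredholm.) -/
open Filter Topology Polynomial

variable {E : Type*} [NormedAddCommGroup E] [NormedSpace ℂ E]

/-- A (continuous linear) operator is Fredholm if its kernel is finite-dimensional and
its range has finite codimension. -/
def IsFredholm (T : E →L[ℂ] E) : Prop :=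
  FiniteDimensional ℂ (LinearMap.ker (T : E →ₗ[ℂ] E)) ∧ FiniteDimensional ℂ (E ⧸ LinearMap.range (T : E →ₗ[ℂ] E))

/-- The Fredholm (essential) spectrum. -/
def fredholmSpectrum (T : E →L[ℂ] E) : Set ℂ := {lam : ℂ | ¬ IsFredholm (T - lam • 1)}

/-- `T` is pseudo-B-Fredholm if `0` is not an accumulation point of its Fredholm spectrum. -/
def IsPseudoBFredholm (T : E →L[ℂ] E) : Prop :=
  ¬ AccPt (0 : ℂ) (Filter.principal (fredholmSpectrum T))

/-- A Riesz operator: `T - λ` is Fredholm for every `λ ≠ 0`. -/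
def IsRiesz (T : E →L[ℂ] E) : Prop := ∀ lam : ℂ, lam ≠ 0 → IsFredholm (T - lam • 1)

lemma range_pow_invariant (T : E →L[ℂ] E) (n : ℕ) :
    ∀ x ∈ LinearMap.range ((T ^ n : E →L[ℂ] E) : E →ₗ[ℂ] E), T x ∈ LinearMap.range ((T ^ n : E →L[ℂ] E) : E →ₗ[ℂ] E) := by
  rintro x ⟨y, rfl⟩
  refine ⟨T y, ?_⟩
  show (T ^ n) (T y) = T ((T ^ n) y)
  have h1 : (T ^ n) (T y) = (T ^ n * T) y := rfl
  have h2 : T ((T ^ n) y) = (T * T ^ n) y := rfl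
  rw [h1, h2, ← pow_succ, ← pow_succ']

/-- Restriction of a continuous linear operator to an invariant submodule. -/
def restrictCLM (T : E →L[ℂ] E) (M : Submodule ℂ E) (h : ∀ x ∈ M, T x ∈ M) : M →L[ℂ] M where
  toLinearMap := (T : E →ₗ[ℂ] E).restrict h
  cont := Continuous.subtype_mk (T.continuous.comp continuous_subtype_val) _

/-- `T` is B-Fredholm if for some `n` the range of `T ^ n` is closed and the operator induced
by `T` on it is Fredholm. -/
def IsBFredholm (T : E →L[ℂ] E) : Prop :=
  ∃ n : ℕ, IsClosed ((LinearMap.range ((T ^ n : E →L[ℂ] E) : E →ₗ[ℂ] E) : Submodule ℂ E) : Set E) ∧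
    IsFredholm (restrictCLM T (LinearMap.range ((T ^ n : E →L[ℂ] E) : E →ₗ[ℂ] E)) (range_pow_invariant T n))

/-- The essential ascent: the least `n` with `ker T ∩ range (T ^ n)` finite-dimensional. -/
noncomputable def essAscent (T : E →L[ℂ] E) : ℕ∞ :=
  ⨅ n ∈ {m : ℕ | FiniteDimensional ℂ ↥(LinearMap.ker (T : E →ₗ[ℂ] E) ⊓ LinearMap.range ((T ^ m : E →L[ℂ] E) : E →ₗ[ℂ] E))}, (n : ℕ∞)

/-- The essential descent: the least `n` with `range T + ker (T ^ n)` of finite codimension. -/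
noncomputable def essDescent (T : E →L[ℂ] E) : ℕ∞ :=
  ⨅ n ∈ {m : ℕ | FiniteDimensional ℂ (E ⧸ (LinearMap.range (T : E →ₗ[ℂ] E) ⊔ LinearMap.ker ((T ^ m : E →L[ℂ] E) : E →ₗ[ℂ] E)))}, (n : ℕ∞)

/-- `0` is a pole (or regular point) of order at most `m` of the resolvent of `Π(T)` in the
Calkin algebra: there is `S` with `TS - ST`, `STS - S` and `T^(m+1) S - T^m` all compact. -/
def DrazinAt (T : E →L[ℂ] E) (m : ℕ) : Prop :=
  ∃ S : E →L[ℂ] E, IsCompactOperator ⇑(T * S - S * T) ∧ IsCompactOperator ⇑(S * T * S - S) ∧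
    IsCompactOperator ⇑(T ^ (m + 1) * S - T ^ m)

/-- `Π(T)` is Drazin invertible in the Calkin algebra. -/
def CalkinDrazin (T : E →L[ℂ] E) : Prop := ∃ m : ℕ, DrazinAt T m

/-- A power compact operator. -/
def IsPowerCompact (K : E →L[ℂ] E) : Prop := ∃ m : ℕ, 1 ≤ m ∧ IsCompactOperator ⇑(K ^ m)

/-- An inessential operator: `1 - S * J` is Fredholm for every `S`. -/
def IsInessential (J : E →L[ℂ] E) : Prop := ∀ S : E →L[ℂ] E, IsFredholm (1 - S * J)

/-- The norm of `Π(A)` in the Calkin algebra: `inf {‖A + K‖ : K compact}`. -/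
noncomputable def calkinNorm (A : E →L[ℂ] E) : ℝ :=
  sInf {r : ℝ | ∃ K : E →L[ℂ] E, IsCompactOperator ⇑K ∧ r = ‖A + K‖}

/-- The ergodic means `M_n(T) = (1 + T + T² + ⋯ + Tⁿ)/n`. -/
noncomputable def meanOp (T : E →L[ℂ] E) (n : ℕ) : E →L[ℂ] E :=
  ((n : ℂ))⁻¹ • ∑ i ∈ Finset.range (n + 1), T ^ i

lemma fd_ext {M : Type*} [AddCommGroup M] [Module ℂ M] (S : Submodule ℂ M)
    (h1 : FiniteDimensional ℂ S) (h2 : FiniteDimensional ℂ (M ⧸ S)) :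
    FiniteDimensional ℂ M := by
  have hr1 : Module.rank ℂ S < Cardinal.aleph0 := Module.rank_lt_aleph0_iff.mpr h1
  have hr2 : Module.rank ℂ (M ⧸ S) < Cardinal.aleph0 := Module.rank_lt_aleph0_iff.mpr h2
  have := rank_quotient_add_rank_of_divisionRing S
  have : Module.rank ℂ M < Cardinal.aleph0 := by
    rw [← this]; exact Cardinal.add_lt_aleph0 hr2 hr1
  exact Module.rank_lt_aleph0_iff.mp this

lemma isFredholm_one : IsFredholm (1 : E →L[ℂ] E) := by
  constructor
  · have : LinearMap.ker ((1 : E →L[ℂ] E) : E →ₗ[ℂ] E) = ⊥ := by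
      ext x; simp [LinearMap.mem_ker]
    rw [this]; infer_instance
  · have : LinearMap.range ((1 : E →L[ℂ] E) : E →ₗ[ℂ] E) = ⊤ := by
      ext x; simp [LinearMap.mem_range]
    rw [this]
    have : Subsingleton (E ⧸ (⊤ : Submodule ℂ E)) :=
      Submodule.Quotient.subsingleton_iff.mpr rfl
    infer_instance

lemma IsFredholm.mul {A B : E →L[ℂ] E} (hA : IsFredholm A) (hB : IsFredholm B) :
    IsFredholm (A * B) := by
  obtain ⟨hkA, hcA⟩ := hA
  obtain ⟨hkB, hcB⟩ := hB
  constructor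
  · -- kernel of A * B
    have hmem : ∀ x : LinearMap.ker ((A * B : E →L[ℂ] E) : E →ₗ[ℂ] E), A (B (x : E)) = 0 := by
      rintro ⟨x, hx⟩
      simpa [ContinuousLinearMap.mul_apply] using hx
    set f : LinearMap.ker ((A * B : E →L[ℂ] E) : E →ₗ[ℂ] E) →ₗ[ℂ] LinearMap.ker (A : E →ₗ[ℂ] E) :=
      LinearMap.codRestrict (LinearMap.ker (A : E →ₗ[ℂ] E))
        ((B : E →ₗ[ℂ] E).comp (LinearMap.ker ((A * B : E →L[ℂ] E) : E →ₗ[ℂ] E)).subtype)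
        (fun x => by simp only [LinearMap.mem_ker]; exact hmem x) with hf
    have hkerf : FiniteDimensional ℂ (LinearMap.ker f) := by
      set g : LinearMap.ker f →ₗ[ℂ] LinearMap.ker (B : E →ₗ[ℂ] E) :=
        LinearMap.codRestrict (LinearMap.ker (B : E →ₗ[ℂ] E))
          ((LinearMap.ker ((A * B : E →L[ℂ] E) : E →ₗ[ℂ] E)).subtype.comp (LinearMap.ker f).subtype)
          (fun x => by
            have hx' : B ((x : LinearMap.ker ((A * B : E →L[ℂ] E) : E →ₗ[ℂ] E)) : E) = 0 :=
              congrArg Subtype.val x.2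
            simp only [LinearMap.mem_ker]; exact hx')
      have hginj : Function.Injective g := by
        intro x y hxy
        have := congrArg Subtype.val hxy
        simp only [g, LinearMap.codRestrict_apply, LinearMap.comp_apply,
          Submodule.subtype_apply] at this
        exact Subtype.val_injective (Subtype.val_injective this)
      exact FiniteDimensional.of_injective g hginj
    have hq : FiniteDimensional ℂ (LinearMap.ker ((A * B : E →L[ℂ] E) : E →ₗ[ℂ] E) ⧸ LinearMap.ker f) := by
      have : FiniteDimensional ℂ (LinearMap.range f) := inferInstance
      exact LinearEquiv.finiteDimensional (f.quotKerEquivRange.symm)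
    exact fd_ext (LinearMap.ker f) hkerf hq
  · -- cokernel of A * B
    set R : Submodule ℂ E := LinearMap.range ((A * B : E →L[ℂ] E) : E →ₗ[ℂ] E) with hR
    have hle : R ≤ LinearMap.range (A : E →ₗ[ℂ] E) := by
      rintro x ⟨y, rfl⟩
      exact ⟨B y, rfl⟩
    set S : Submodule ℂ (E ⧸ R) := (LinearMap.range (A : E →ₗ[ℂ] E)).map R.mkQ with hS
    have hSfd : FiniteDimensional ℂ S := by
      set h : E ⧸ LinearMap.range (B : E →ₗ[ℂ] E) →ₗ[ℂ] E ⧸ R :=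
        Submodule.liftQ (LinearMap.range (B : E →ₗ[ℂ] E)) (R.mkQ.comp (A : E →ₗ[ℂ] E))
          (by
            rintro x ⟨y, rfl⟩
            simp only [LinearMap.mem_ker, LinearMap.comp_apply]
            rw [Submodule.mkQ_apply, Submodule.Quotient.mk_eq_zero]
            exact ⟨y, rfl⟩) with hh
      have hrange : LinearMap.range h = S := by
        rw [hh, Submodule.range_liftQ]
        ext z
        simp only [hS, LinearMap.mem_range, Submodule.mem_map, LinearMap.comp_apply]
        constructor
        · rintro ⟨x, rfl⟩; exact ⟨A x, ⟨x, rfl⟩, rfl⟩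
        · rintro ⟨w, ⟨x, rfl⟩, rfl⟩; exact ⟨x, rfl⟩
      have : FiniteDimensional ℂ (LinearMap.range h) := inferInstance
      rwa [hrange] at this
    have hQfd : FiniteDimensional ℂ ((E ⧸ R) ⧸ S) := by
      have e := Submodule.quotientQuotientEquivQuotient R (LinearMap.range (A : E →ₗ[ℂ] E)) hle
      exact LinearEquiv.finiteDimensional e.symm
    exact fd_ext S hSfd hQfd

lemma isFredholm_of_mul_mul {A B : E →L[ℂ] E} (h1 : IsFredholm (B * A))
    (h2 : IsFredholm (A * B)) : IsFredholm A := by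
  constructor
  · haveI := h1.1
    refine Submodule.finiteDimensional_of_le (S₂ := LinearMap.ker ((B * A : E →L[ℂ] E) : E →ₗ[ℂ] E)) ?_
    intro x hx
    simp only [LinearMap.mem_ker] at hx ⊢
    simp [ContinuousLinearMap.mul_apply, hx]
  · haveI := h2.2
    have hle : LinearMap.range ((A * B : E →L[ℂ] E) : E →ₗ[ℂ] E) ≤ LinearMap.range (A : E →ₗ[ℂ] E) := by
      rintro x ⟨y, rfl⟩; exact ⟨B y, rfl⟩
    set q : E ⧸ LinearMap.range ((A * B : E →L[ℂ] E) : E →ₗ[ℂ] E) →ₗ[ℂ] E ⧸ LinearMap.range (A : E →ₗ[ℂ] E) :=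
      Submodule.liftQ _ (LinearMap.range (A : E →ₗ[ℂ] E)).mkQ
        (fun x hx => by
          rw [LinearMap.mem_ker, Submodule.mkQ_apply, Submodule.Quotient.mk_eq_zero]
          exact hle hx) with hq
    have hsurj : Function.Surjective q := by
      intro y
      obtain ⟨x, rfl⟩ := Submodule.mkQ_surjective _ y
      exact ⟨(LinearMap.range ((A * B : E →L[ℂ] E) : E →ₗ[ℂ] E)).mkQ x, by rw [hq]; rfl⟩
    exact Module.Finite.of_surjective q hsurj

lemma isFredholm_list_prod (l : List (E →L[ℂ] E))
    (h : ∀ a ∈ l, IsFredholm a) : IsFredholm l.prod := by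
  induction l with
  | nil => simpa using isFredholm_one
  | cons a l ih =>
    rw [List.prod_cons]
    exact (h a List.mem_cons_self).mul
      (ih fun b hb => h b (List.mem_cons_of_mem a hb))

lemma pow_sub_smul_eq_prod (T : E →L[ℂ] E) {n : ℕ} (hn : n ≠ 0) (lam : ℂ) :
    T ^ n - lam • 1 =
      ((X ^ n - C lam : ℂ[X]).roots.toList.map (fun mu => T - mu • 1)).prod := by
  have hmon : (X ^ n - C lam : ℂ[X]).Monic := monic_X_pow_sub_C lam hn
  have hsplit : Splits (X ^ n - C lam : ℂ[X]) :=
    IsAlgClosed.splits _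
  have hfac := hsplit.eq_prod_roots_of_monic hmon
  rw [← Multiset.coe_toList (X ^ n - C lam : ℂ[X]).roots, Multiset.map_coe,
    Multiset.prod_coe] at hfac
  have := congrArg (fun p : ℂ[X] => aeval T p) hfac
  simp only [map_sub, map_pow, aeval_X, aeval_C, Algebra.algebraMap_eq_smul_one] at this
  rw [this, map_list_prod, List.map_map]
  congr 1
  apply List.map_congr_left
  intro mu _
  simp [Algebra.algebraMap_eq_smul_one]

lemma isFredholm_of_pow_sub {T : E →L[ℂ] E} {mu : ℂ} {n : ℕ}
    (h : IsFredholm (T ^ n - (mu ^ n) • 1)) : IsFredholm (T - mu • 1) := by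
  have hc : Commute T (mu • (1 : E →L[ℂ] E)) := (Commute.one_right T).smul_right mu
  have h3 : (mu • (1 : E →L[ℂ] E)) ^ n = (mu ^ n) • 1 := by
    rw [_root_.smul_pow, one_pow]
  have h1 := hc.geom_sum₂_mul n
  have h2 := hc.mul_geom_sum₂ n
  rw [h3] at h1 h2
  have hA := h; rw [← h2] at hA
  have hB := h; rw [← h1] at hB
  exact isFredholm_of_mul_mul hB hA

lemma not_accPt_iff' (C : Set ℂ) :
    ¬ AccPt (0 : ℂ) (𝓟 C) ↔ ∃ r > 0, ∀ y : ℂ, ‖y‖ < r → y ∈ C → y = 0 := by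
  rw [accPt_iff_nhds]
  push_neg
  constructor
  · rintro ⟨U, hU, h⟩
    obtain ⟨r, hr, hball⟩ := Metric.mem_nhds_iff.mp hU
    refine ⟨r, hr, fun y hy hyC => ?_⟩
    have : y ∈ U := hball (by simpa [Metric.mem_ball, dist_eq_norm] using hy)
    exact h y ⟨this, hyC⟩
  · rintro ⟨r, hr, h⟩
    refine ⟨Metric.ball 0 r, Metric.ball_mem_nhds 0 hr, fun y hy => ?_⟩
    exact h y (by simpa [Metric.mem_ball, dist_eq_norm] using hy.1) hy.2

variable {X : Type*} [NormedAddCommGroup X] [NormedSpace ℂ X] [CompleteSpace X]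

/-- `T` is pseudo-B-Fredholm iff `T ^ n` is pseudo-B-Fredholm, for every `n ≥ 1`. -/
theorem pseudoBFredholm_pow_iff (hX : ¬ FiniteDimensional ℂ X) (T : X →L[ℂ] X) (n : ℕ)
    (hn : 1 ≤ n) :
    IsPseudoBFredholm T ↔ IsPseudoBFredholm (T ^ n) := by
  have hn0 : n ≠ 0 := by omega
  unfold IsPseudoBFredholm
  rw [not_accPt_iff', not_accPt_iff']
  constructor
  · rintro ⟨r, hr, h⟩
    refine ⟨r ^ n, pow_pos hr n, fun lam hlam hmem => ?_⟩
    by_contra hlam0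
    refine hmem ?_
    rw [pow_sub_smul_eq_prod T hn0 lam]
    apply isFredholm_list_prod
    intro a ha
    simp only [List.mem_map] at ha
    obtain ⟨mu, hmu, rfl⟩ := ha
    have hroot : mu ∈ Polynomial.nthRoots n lam := by
      rw [Polynomial.nthRoots, ← Multiset.mem_toList]
      exact hmu
    have hmun : mu ^ n = lam := (Polynomial.mem_nthRoots (by omega)).mp hroot
    have hmu0 : mu ≠ 0 := by
      rintro rfl
      exact hlam0 (by rw [← hmun, zero_pow hn0])
    have hnorm : ‖mu‖ < r := by
      refine lt_of_pow_lt_pow_left₀ n hr.le ?_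
      rw [← norm_pow, hmun]
      exact hlam
    by_contra hnf
    exact hmu0 (h mu hnorm hnf)
  · rintro ⟨r, hr, h⟩
    refine ⟨min r 1, lt_min hr one_pos, fun mu hmu hmem => ?_⟩
    by_contra hmu0
    have h1 : ‖mu‖ < 1 := lt_of_lt_of_le hmu (min_le_right r 1)
    have h2 : ‖mu ^ n‖ < r := by
      rw [norm_pow]
      calc ‖mu‖ ^ n ≤ ‖mu‖ ^ 1 := pow_le_pow_of_le_one (norm_nonneg _) h1.le hn
        _ = ‖mu‖ := pow_one _
        _ < r := lt_of_lt_of_le hmu (min_le_left r 1)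
    have hpow : mu ^ n ≠ 0 := pow_ne_zero n hmu0
    have hfred : IsFredholm (T ^ n - (mu ^ n) • 1) := by
      by_contra hc
      exact hpow (h (mu ^ n) h2 hc)
    exact hmem (isFredholm_of_pow_sub hfred)
end

section
/- Let X be an infinite-dimensional complex Banach space and T a B-Fredholm bounded linear operator on X with finite essential ascent and finite essential descent both equal to d. If d = 0, or if the range R(T^{d−1}) is closed, then 0 is a pole of the resolvent of Π(T) of order d: the least m ∈ ℕ for which there exists S ∈ L(X) with TS − ST, STS − S, and T^{m+1}S − T^m all compact is equal to d. -/
open Filter Topology Polynomial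

variable {E : Type*} [NormedAddCommGroup E] [NormedSpace ℂ E]

variable {X : Type*} [NormedAddCommGroup X] [NormedSpace ℂ X] [CompleteSpace X]


/-! ### Auxiliary lemmas -/

section RingLemmas
variable {R : Type*} [Ring R]

lemma drazin_red {a s : R} (d : ℕ) (h2 : a ^ (d + 1) * s = a ^ d) (i j : ℕ) :
    a ^ (d + 1 + i) * s ^ (j + 1) = a ^ (d + i) * s ^ j := by
  calc a ^ (d+1+i) * s ^ (j+1)
      = (a ^ i * a ^ (d+1)) * (s * s ^ j) := by
        rw [show d+1+i = i+(d+1) from by omega, pow_add, pow_succ' s j]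
    _ = a ^ i * ((a ^ (d+1) * s) * s ^ j) := by rw [mul_assoc, mul_assoc]
    _ = a ^ i * (a ^ d * s ^ j) := by rw [h2]
    _ = a ^ (d+i) * s ^ j := by rw [← mul_assoc, ← pow_add, Nat.add_comm i d]

lemma drazin_red_iter {a s : R} (d : ℕ) (h2 : a ^ (d + 1) * s = a ^ d) (k j : ℕ) :
    a ^ (d + k) * s ^ (j + k) = a ^ d * s ^ j := by
  induction k with
  | zero => simp
  | succ k ih =>
      have h := drazin_red d h2 k (j + k)
      rw [show d + (k+1) = d + 1 + k from by omega, show j + (k+1) = (j + k) + 1 from by omega,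
        h, ih]

lemma drazin_core {a s : R} (d : ℕ) (h1 : a * s = s * a) (h2 : a ^ (d + 1) * s = a ^ d) :
    a * (a ^ d * s ^ (d+1)) = (a ^ d * s ^ (d+1)) * a ∧
    (a ^ d * s ^ (d+1)) * a * (a ^ d * s ^ (d+1)) = a ^ d * s ^ (d+1) ∧
    a ^ (d + 1) * (a ^ d * s ^ (d+1)) = a ^ d := by
  have hc : Commute a s := h1
  have hcp : ∀ m n : ℕ, a ^ m * s ^ n = s ^ n * a ^ m := fun m n => (hc.pow_pow m n).eq
  have hsa : ∀ n : ℕ, s ^ n * a = a * s ^ n := by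
    intro n; have := hcp 1 n; rwa [pow_one, eq_comm] at this
  have hba : (a ^ d * s ^ (d+1)) * a = a ^ (d+1) * s ^ (d+1) := by
    rw [mul_assoc, hsa, ← mul_assoc, ← pow_succ]
  have hab : a * (a ^ d * s ^ (d+1)) = a ^ (d+1) * s ^ (d+1) := by
    rw [← mul_assoc, ← pow_succ']
  refine ⟨hab.trans hba.symm, ?_, ?_⟩
  · calc (a ^ d * s ^ (d+1)) * a * (a ^ d * s ^ (d+1))
        = (a ^ (d+1) * s ^ (d+1)) * (a ^ d * s ^ (d+1)) := by rw [hba]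
      _ = a ^ (d+1) * ((s ^ (d+1) * a ^ d) * s ^ (d+1)) := by rw [mul_assoc, mul_assoc]
      _ = a ^ (d+1) * ((a ^ d * s ^ (d+1)) * s ^ (d+1)) := by rw [← hcp d (d+1)]
      _ = (a ^ (d+1) * a ^ d) * (s ^ (d+1) * s ^ (d+1)) := by
          rw [mul_assoc, mul_assoc]
      _ = a ^ (d + (d+1)) * s ^ ((d+1) + (d+1)) := by
          rw [← pow_add, ← pow_add, Nat.add_comm (d+1) d]
      _ = a ^ d * s ^ (d+1) := drazin_red_iter d h2 (d+1) (d+1)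
  · calc a ^ (d+1) * (a ^ d * s ^ (d+1))
        = a ^ (d + (d+1)) * s ^ (0 + (d+1)) := by
          rw [← mul_assoc, ← pow_add, Nat.add_comm (d+1) d, Nat.zero_add]
      _ = a ^ d * s ^ 0 := drazin_red_iter d h2 (d+1) 0
      _ = a ^ d := by rw [pow_zero, mul_one]

end RingLemmas

section ENatLemmas

lemma inf_set_eq_coe {S : Set ℕ} {d : ℕ} (h : (⨅ n ∈ S, (n : ℕ∞)) = (d : ℕ∞)) :
    (∀ k ∈ S, d ≤ k) ∧ ∃ k ∈ S, k ≤ d := by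
  constructor
  · intro k hk
    have : (⨅ n ∈ S, (n : ℕ∞)) ≤ (k : ℕ∞) := biInf_le _ hk
    rw [h] at this
    exact_mod_cast this
  · by_contra hcon
    push_neg at hcon
    have : ((d + 1 : ℕ) : ℕ∞) ≤ ⨅ n ∈ S, (n : ℕ∞) := by
      refine le_iInf₂ fun k hk => ?_
      have := hcon k hk
      exact_mod_cast Nat.succ_le_of_lt this
    rw [h] at this
    exact_mod_cast Nat.not_succ_le_self d (by exact_mod_cast this)
end ENatLemmas

section AlgLemmas
variable {K : Type*} [Field K] {V : Type*} [AddCommGroup V] [Module K V]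

lemma exists_fd_compl_of_quotient (A : Submodule K V) [FiniteDimensional K (V ⧸ A)] :
    ∃ G : Submodule K V, FiniteDimensional K G ∧ A ⊔ G = ⊤ := by
  obtain ⟨s, hs⟩ := Module.finite_def.1 ‹FiniteDimensional K (V ⧸ A)›
  set f := Function.surjInv (Submodule.mkQ_surjective A) with hf
  refine ⟨Submodule.span K (f '' s), ?_, ?_⟩
  · exact FiniteDimensional.span_of_finite K ((s.finite_toSet).image f)
  · have hmap : Submodule.map A.mkQ (Submodule.span K (f '' s)) = ⊤ := by
      rw [Submodule.map_span, Set.image_image]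
      have : ∀ x : V ⧸ A, A.mkQ (f x) = x := fun x =>
        Function.surjInv_eq (Submodule.mkQ_surjective A) x
      rw [show (fun x => A.mkQ (f x)) '' ↑s = ↑s from by
        ext y; simp [this]]
      exact hs
    have := Submodule.comap_map_mkQ A (Submodule.span K (f '' s))
    rw [hmap, Submodule.comap_top] at this
    exact this.symm

lemma fd_quot_mono {A B : Submodule K V} (h : A ≤ B) [FiniteDimensional K (V ⧸ A)] :
    FiniteDimensional K (V ⧸ B) := by
  have hsurj : Function.Surjective (Submodule.mapQ A B LinearMap.id (by simpa using h)) := by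
    intro y
    obtain ⟨x, rfl⟩ := B.mkQ_surjective y
    exact ⟨A.mkQ x, by simp [Submodule.mapQ_apply]⟩
  exact Module.Finite.of_surjective _ hsurj
end AlgLemmas

section TopLemmas
variable {X : Type*} [NormedAddCommGroup X] [NormedSpace ℂ X]

lemma isClosed_sup_fd {A F : Submodule ℂ X} (hA : IsClosed (A : Set X))
    [FiniteDimensional ℂ F] : IsClosed ((A ⊔ F : Submodule ℂ X) : Set X) := by
  haveI : IsClosed (A : Set X) := hA
  haveI : FiniteDimensional ℂ (Submodule.map A.mkQ F) := Module.Finite.map F A.mkQ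
  have h1 : IsClosed ((Submodule.map A.mkQ F : Submodule ℂ (X ⧸ A)) : Set (X ⧸ A)) :=
    Submodule.closed_of_finiteDimensional _
  have h2 : A ⊔ F = Submodule.comap A.mkQ (Submodule.map A.mkQ F) :=
    (Submodule.comap_map_mkQ A F).symm
  rw [h2]
  exact h1.preimage (A.isOpenQuotientMap_mkQ.continuous)

lemma isCompactOperator_of_mem_fd {g : X →L[ℂ] X} {F : Submodule ℂ X}
    [FiniteDimensional ℂ F] (h : ∀ x, g x ∈ F) : IsCompactOperator ⇑g := by
  haveI : ProperSpace F := FiniteDimensional.proper ℂ F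
  set g' : X →L[ℂ] F := g.codRestrict F h with hg'
  have hc : IsCompactOperator ⇑g' := by
    refine ⟨Metric.closedBall (0 : F) ‖g'‖, isCompact_closedBall _ _, ?_⟩
    filter_upwards [Metric.ball_mem_nhds (0 : X) one_pos] with x hx
    rw [Set.mem_preimage, Metric.mem_closedBall, dist_zero_right]
    calc ‖g' x‖ ≤ ‖g'‖ * ‖x‖ := g'.le_opNorm x
      _ ≤ ‖g'‖ * 1 := by
          have := mem_ball_zero_iff.1 hx
          exact mul_le_mul_of_nonneg_left this.le (norm_nonneg g')
      _ = ‖g'‖ := mul_one _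
  have := hc.continuous_comp (F.subtypeL.continuous)
  exact this

lemma isCompactOperator_sandwich {Y : Type*} [NormedAddCommGroup Y] [NormedSpace ℂ Y]
    {g : Y →L[ℂ] Y} (hg : IsCompactOperator ⇑g) (i : Y →L[ℂ] X) (p : X →L[ℂ] Y) :
    IsCompactOperator ⇑(i.comp (g.comp p)) := by
  have h1 : IsCompactOperator (⇑g ∘ ⇑p) := hg.comp_clm p
  have h2 : IsCompactOperator (⇑i ∘ (⇑g ∘ ⇑p)) := h1.continuous_comp i.continuous
  exact h2
end TopLemmas

section CRLemma
variable {M N : Type*} [NormedAddCommGroup M] [NormedSpace ℂ M] [CompleteSpace M]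
  [NormedAddCommGroup N] [NormedSpace ℂ N] [CompleteSpace N]

open LinearMap (ker range) in
lemma isClosed_range_of_fd_compl (A : M →L[ℂ] N) {G : Submodule ℂ N}
    [FiniteDimensional ℂ G] (h : IsCompl (range (A : M →ₗ[ℂ] N)) G) :
    IsClosed ((range (A : M →ₗ[ℂ] N) : Submodule ℂ N) : Set N) := by
  haveI : CompleteSpace G := FiniteDimensional.complete ℂ G
  set C : M × G →L[ℂ] N := A.coprod G.subtypeL with hC
  have hsurj : Function.Surjective C := by
    intro y
    have : y ∈ range (A : M →ₗ[ℂ] N) ⊔ G := by rw [h.sup_eq_top]; trivial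
    obtain ⟨r, hr, g, hg, hrg⟩ := Submodule.mem_sup.1 this
    obtain ⟨m, hm⟩ := hr
    exact ⟨(m, ⟨g, hg⟩), by
      show A m + g = y
      rw [show A m = r from hm]; exact hrg⟩
  have hq := C.isQuotientMap hsurj
  rw [← hq.isClosed_preimage]
  have : ⇑C ⁻¹' (range (A : M →ₗ[ℂ] N) : Set N) = {p : M × G | p.2 = 0} := by
    ext ⟨m, g⟩
    simp only [Set.mem_preimage, SetLike.mem_coe, Set.mem_setOf_eq]
    constructor
    · intro hmem
      have hmA : A m ∈ range (A : M →ₗ[ℂ] N) := LinearMap.mem_range_self _ m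
      have : (g : N) ∈ range (A : M →ₗ[ℂ] N) := by
        have : A m + (g : N) ∈ range (A : M →ₗ[ℂ] N) := by simpa [hC] using hmem
        simpa using (Submodule.add_mem_iff_right _ hmA).1 this
      have : (g : N) ∈ range (A : M →ₗ[ℂ] N) ⊓ G := ⟨this, g.2⟩
      rw [h.inf_eq_bot] at this
      exact Subtype.ext (by simpa using this)
    · rintro rfl
      show A m + ((0 : G) : N) ∈ range (A : M →ₗ[ℂ] N)
      simp only [ZeroMemClass.coe_zero, add_zero]
      exact LinearMap.mem_range_self (A : M →ₗ[ℂ] N) m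
  rw [this]
  exact isClosed_eq continuous_snd continuous_const
end CRLemma

section Atkinson
variable {E₀ : Type*} [NormedAddCommGroup E₀] [NormedSpace ℂ E₀] [CompleteSpace E₀]

open LinearMap (ker range) in
lemma exists_pseudoinverse (A : E₀ →L[ℂ] E₀) [FiniteDimensional ℂ (ker A.toLinearMap)]
    {G : Submodule ℂ E₀} [FiniteDimensional ℂ G]
    (hcompl : IsCompl (range (A : E₀ →ₗ[ℂ] E₀)) G)
    (hcl : IsClosed ((range (A : E₀ →ₗ[ℂ] E₀) : Submodule ℂ E₀) : Set E₀)) :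
    ∃ B : E₀ →L[ℂ] E₀, IsCompactOperator ⇑(1 - A * B) ∧ IsCompactOperator ⇑(1 - B * A) := by
  classical
  obtain ⟨p1, hp1⟩ := Submodule.ClosedComplemented.of_finiteDimensional (ker A.toLinearMap)
  set N : Submodule ℂ E₀ := ker p1.toLinearMap with hN
  have hNclosed : IsClosed (N : Set E₀) := isClosed_eq p1.continuous continuous_const
  have hkerN : ∀ x : E₀, x - (p1 x : E₀) ∈ N := by
    intro x
    have : p1 ((p1 x : E₀)) = p1 x := hp1 (p1 x)
    simp only [hN, LinearMap.mem_ker, ContinuousLinearMap.coe_coe, map_sub, this, sub_self]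
  have hGclosed : IsClosed (G : Set E₀) := G.closed_of_finiteDimensional
  obtain ⟨p2, hp2⟩ := Submodule.ClosedComplemented.of_isCompl_isClosed hcompl hcl hGclosed
  haveI : CompleteSpace N := hNclosed.completeSpace_coe
  haveI : CompleteSpace (range (A : E₀ →ₗ[ℂ] E₀)) := hcl.completeSpace_coe
  set A' : N →L[ℂ] (range (A : E₀ →ₗ[ℂ] E₀)) :=
    (A.comp N.subtypeL).codRestrict _ (fun x => LinearMap.mem_range_self _ _) with hA'
  have hA'app : ∀ n : N, ((A' n : E₀)) = A (n : E₀) := fun n => rfl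
  have hkerA' : ker A'.toLinearMap = ⊥ := by
    rw [LinearMap.ker_eq_bot']
    intro n hn
    have h1 : A (n : E₀) = 0 := by
      have := congrArg (Subtype.val) hn
      simpa [hA'app] using this
    have h2 : p1 ((n : E₀)) = ⟨(n : E₀), h1⟩ := hp1 ⟨(n : E₀), h1⟩
    have h3 : p1 ((n : E₀)) = 0 := n.2
    apply Subtype.ext
    have h4 : (⟨(n : E₀), h1⟩ : ker A.toLinearMap) = 0 := h2.symm.trans h3
    simpa using congrArg Subtype.val h4
  have hranA' : range A'.toLinearMap = ⊤ := by
    rw [LinearMap.range_eq_top]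
    rintro ⟨y, hy⟩
    obtain ⟨x, rfl⟩ := hy
    refine ⟨⟨x - (p1 x : E₀), hkerN x⟩, ?_⟩
    apply Subtype.ext
    show A (x - (p1 x : E₀)) = A x
    have : A ((p1 x : E₀)) = 0 := (p1 x).2
    rw [map_sub, this, sub_zero]
  set e := ContinuousLinearEquiv.ofBijective A' hkerA' hranA' with he
  set B : E₀ →L[ℂ] E₀ :=
    N.subtypeL ∘L ((e.symm : (range (A : E₀ →ₗ[ℂ] E₀)) →L[ℂ] N) ∘L p2) with hB
  refine ⟨B, ?_, ?_⟩
  · have hABx : ∀ x : E₀, A (B x) = (p2 x : E₀) := by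
      intro x
      show A ((e.symm (p2 x) : N) : E₀) = (p2 x : E₀)
      have h5 := e.apply_symm_apply (p2 x)
      calc A ((e.symm (p2 x) : N) : E₀) = ((e (e.symm (p2 x)) : E₀)) := rfl
        _ = (p2 x : E₀) := by rw [h5]
    haveI : FiniteDimensional ℂ (E₀ ⧸ (range (A : E₀ →ₗ[ℂ] E₀))) :=
      LinearEquiv.finiteDimensional
        (Submodule.quotientEquivOfIsCompl _ G hcompl).symm
    have hcompl2 : IsCompl (range (A : E₀ →ₗ[ℂ] E₀)) (ker p2.toLinearMap) := by
      constructor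
      · rw [disjoint_iff]
        ext x
        simp only [Submodule.mem_inf, Submodule.mem_bot, LinearMap.mem_ker, ContinuousLinearMap.coe_coe]
        constructor
        · rintro ⟨hx1, hx2⟩
          have := hp2 ⟨x, hx1⟩
          have hx : (p2 x : E₀) = x := congrArg Subtype.val this
          rw [hx2] at hx
          simpa using hx.symm
        · rintro rfl; exact ⟨Submodule.zero_mem _, map_zero _⟩
      · rw [codisjoint_iff]
        ext x
        simp only [Submodule.mem_top, iff_true]
        have hx : x - (p2 x : E₀) ∈ ker p2.toLinearMap := by
          have : p2 ((p2 x : E₀)) = p2 x := hp2 (p2 x)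
          simp [LinearMap.mem_ker, map_sub, this]
        exact Submodule.mem_sup.2 ⟨(p2 x : E₀), (p2 x).2, x - (p2 x : E₀), hx, by abel⟩
    haveI : FiniteDimensional ℂ (ker p2.toLinearMap) :=
      LinearEquiv.finiteDimensional (Submodule.quotientEquivOfIsCompl _ _ hcompl2)
    refine isCompactOperator_of_mem_fd (F := ker p2.toLinearMap) ?_
    intro x
    have : (1 - A * B) x = x - (p2 x : E₀) := by
      simp [ContinuousLinearMap.sub_apply, ContinuousLinearMap.mul_apply, hABx x]
    rw [this]
    have hfix : p2 ((p2 x : E₀)) = p2 x := hp2 (p2 x)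
    simp [LinearMap.mem_ker, map_sub, hfix]
  · refine isCompactOperator_of_mem_fd (F := ker A.toLinearMap) ?_
    intro x
    have hBAx : B (A x) = x - (p1 x : E₀) := by
      have h1 : p2 (A x) = ⟨A x, LinearMap.mem_range_self _ x⟩ := by
        have := hp2 ⟨A x, LinearMap.mem_range_self _ x⟩
        exact this
      show ((e.symm (p2 (A x)) : N) : E₀) = x - (p1 x : E₀)
      rw [h1]
      have : e ⟨x - (p1 x : E₀), hkerN x⟩ = ⟨A x, LinearMap.mem_range_self _ x⟩ := by
        apply Subtype.ext
        show A (x - (p1 x : E₀)) = A x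
        have : A ((p1 x : E₀)) = 0 := (p1 x).2
        rw [map_sub, this, sub_zero]
      rw [← this, e.symm_apply_apply]
    have : (1 - B * A) x = (p1 x : E₀) := by
      simp [ContinuousLinearMap.sub_apply, ContinuousLinearMap.mul_apply, hBAx]
    rw [this]
    exact (p1 x).2
end Atkinson

section CalkinIdeal
variable (Y : Type*) [NormedAddCommGroup Y] [NormedSpace ℂ Y]

noncomputable def cptIdeal : TwoSidedIdeal (Y →L[ℂ] Y) :=
  TwoSidedIdeal.mk' {f : Y →L[ℂ] Y | IsCompactOperator ⇑f}
    (by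
      show IsCompactOperator ⇑(0 : Y →L[ℂ] Y)
      exact isCompactOperator_zero)
    (fun {x y} hx hy => by
      show IsCompactOperator ⇑(x + y)
      exact hx.add hy)
    (fun {x} hx => by
      show IsCompactOperator ⇑(-x)
      exact hx.neg)
    (fun {x y} hy => by
      show IsCompactOperator ⇑(x * y)
      exact hy.continuous_comp x.continuous)
    (fun {x y} hx => by
      show IsCompactOperator ⇑(x * y)
      exact hx.comp_clm y)

lemma mem_cptIdeal {f : Y →L[ℂ] Y} : f ∈ cptIdeal Y ↔ IsCompactOperator ⇑f := by
  rw [cptIdeal, TwoSidedIdeal.mem_mk']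
  rfl

noncomputable def calkinMk : (Y →L[ℂ] Y) →+* (cptIdeal Y).ringCon.Quotient :=
  (cptIdeal Y).ringCon.mk'

lemma calkinMk_eq_zero_iff {f : Y →L[ℂ] Y} :
    calkinMk Y f = 0 ↔ IsCompactOperator ⇑f := by
  have h0 : (0 : (cptIdeal Y).ringCon.Quotient) = calkinMk Y 0 := (map_zero _).symm
  rw [h0]
  show ((f : (cptIdeal Y).ringCon.Quotient) = ((0 : Y →L[ℂ] Y) : (cptIdeal Y).ringCon.Quotient))
    ↔ _
  rw [RingCon.eq, (cptIdeal Y).rel_iff, sub_zero, mem_cptIdeal]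
end CalkinIdeal

section PowLemmas
variable {X : Type*} [NormedAddCommGroup X] [NormedSpace ℂ X]

lemma range_pow_le (T : X →L[ℂ] X) {k l : ℕ} (h : k ≤ l) :
    LinearMap.range (T ^ l).toLinearMap ≤ LinearMap.range (T ^ k).toLinearMap := by
  rintro x ⟨y, rfl⟩
  refine ⟨(T ^ (l - k)) y, ?_⟩
  simp only [ContinuousLinearMap.coe_coe]
  rw [← ContinuousLinearMap.mul_apply, ← pow_add]
  congr 2
  omega

lemma ker_pow_le (T : X →L[ℂ] X) {k l : ℕ} (h : k ≤ l) :
    LinearMap.ker (T ^ k).toLinearMap ≤ LinearMap.ker (T ^ l).toLinearMap := by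
  intro x hx
  have hx' : (T ^ k) x = 0 := hx
  have hn : (T ^ l) x = (T ^ (l - k)) ((T ^ k) x) := by
    rw [← ContinuousLinearMap.mul_apply, ← pow_add]; congr 2; omega
  have : (T ^ l) x = 0 := by rw [hn, hx', map_zero]
  exact this

lemma restrictCLM_pow_apply (T : X →L[ℂ] X) (M : Submodule ℂ X) (h : ∀ x ∈ M, T x ∈ M)
    (k : ℕ) (z : M) : (((restrictCLM T M h) ^ k) z : X) = (T ^ k) (z : X) := by
  induction k generalizing z with
  | zero => simp
  | succ k ih =>
      have h1 : ((restrictCLM T M h) ^ (k+1)) z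
          = ((restrictCLM T M h) ^ k) ((restrictCLM T M h) z) := by
        rw [pow_succ]; rfl
      rw [h1, ih, show ((restrictCLM T M h) z : X) = T (z : X) from rfl,
        ← ContinuousLinearMap.mul_apply, ← pow_succ]

variable (T : X →L[ℂ] X)

lemma range_step (k : ℕ) [FiniteDimensional ℂ (X ⧸ (LinearMap.range T.toLinearMap ⊔ LinearMap.ker (T ^ k).toLinearMap))] :
    ∃ F : Submodule ℂ X, FiniteDimensional ℂ F ∧
      LinearMap.range (T ^ k).toLinearMap ≤ LinearMap.range (T ^ (k + 1)).toLinearMap ⊔ F := by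
  obtain ⟨G, hGfd, hGtop⟩ :=
    exists_fd_compl_of_quotient (LinearMap.range T.toLinearMap ⊔ LinearMap.ker (T ^ k).toLinearMap)
  haveI := hGfd
  refine ⟨Submodule.map ((T ^ k : X →L[ℂ] X) : X →ₗ[ℂ] X) G,
    Module.Finite.map G ((T ^ k : X →L[ℂ] X) : X →ₗ[ℂ] X), ?_⟩
  rintro x ⟨y, rfl⟩
  have hy : y ∈ (LinearMap.range T.toLinearMap ⊔ LinearMap.ker (T ^ k).toLinearMap) ⊔ G := hGtop ▸ Submodule.mem_top
  obtain ⟨u, hu, g, hg, rfl⟩ := Submodule.mem_sup.1 hy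
  obtain ⟨v, hv, w, hw, rfl⟩ := Submodule.mem_sup.1 hu
  obtain ⟨z, rfl⟩ := hv
  have hw0 : (T ^ k) w = 0 := hw
  refine Submodule.mem_sup.2 ⟨(T ^ (k+1)) z, LinearMap.mem_range_self _ z,
    (T ^ k) g, Submodule.mem_map_of_mem hg, ?_⟩
  have h1 : (T ^ k) (T z) = (T ^ (k+1)) z := by
    rw [← ContinuousLinearMap.mul_apply, ← pow_succ]
  simp only [ContinuousLinearMap.coe_coe]
  rw [map_add, map_add, h1, hw0, add_zero]

lemma range_chain (dd : ℕ)
    (hfd : ∀ k, dd ≤ k → FiniteDimensional ℂ (X ⧸ (LinearMap.range T.toLinearMap ⊔ LinearMap.ker (T ^ k).toLinearMap)))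
    (n : ℕ) (hn : dd ≤ n) :
    ∃ F : Submodule ℂ X, FiniteDimensional ℂ F ∧
      LinearMap.range (T ^ dd).toLinearMap ≤ LinearMap.range (T ^ n).toLinearMap ⊔ F := by
  induction n, hn using Nat.le_induction with
  | base => exact ⟨⊥, inferInstance, by simp⟩
  | succ n hdn ih =>
      obtain ⟨F, hFfd, hF⟩ := ih
      haveI := hfd n hdn
      obtain ⟨F2, hF2fd, hF2⟩ := range_step T n
      refine ⟨F2 ⊔ F, ?_, ?_⟩
      · haveI := hFfd; haveI := hF2fd
        exact Submodule.finiteDimensional_sup F2 F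
      · refine hF.trans ?_
        refine sup_le (hF2.trans ?_) ?_
        · exact sup_le_sup_left le_sup_left _
        · exact le_sup_of_le_right le_sup_right
end PowLemmas

set_option maxHeartbeats 4000000 in
set_option synthInstance.maxHeartbeats 400000 in
/-- If `T` is B-Fredholm with `a_e(T) = d_e(T) = d`, and `d = 0` or `R(T ^ (d - 1))` is
closed, then `0` is a pole of the resolvent of `Π(T)` of order `d`. -/
theorem bFredholm_pole_order_eq (hX : ¬ FiniteDimensional ℂ X) (T : X →L[ℂ] X)
    (hT : IsBFredholm T) (d : ℕ)
    (ha : essAscent T = (d : ℕ∞)) (hd : essDescent T = (d : ℕ∞))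
    (hclosed : d = 0 ∨ IsClosed ((LinearMap.range ((T ^ (d - 1) : X →L[ℂ] X) : X →ₗ[ℂ] X) : Submodule ℂ X) : Set X)) :
    IsLeast {m : ℕ | DrazinAt T m} d := by
  classical
  -- extract information from the essential ascent and descent
  have ha' : (⨅ n ∈ {m : ℕ | FiniteDimensional ℂ
      ↥(LinearMap.ker T.toLinearMap ⊓ LinearMap.range (T ^ m).toLinearMap)}, (n : ℕ∞)) = (d : ℕ∞) := ha
  have hd' : (⨅ n ∈ {m : ℕ | FiniteDimensional ℂ
      (X ⧸ (LinearMap.range T.toLinearMap ⊔ LinearMap.ker (T ^ m).toLinearMap))}, (n : ℕ∞)) = (d : ℕ∞) := hd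
  obtain ⟨haLB, ka, hkaS, hkale⟩ := inf_set_eq_coe ha'
  obtain ⟨hdLB, kd, hkdS, hkdle⟩ := inf_set_eq_coe hd'
  haveI hads : FiniteDimensional ℂ ↥(LinearMap.ker T.toLinearMap ⊓ LinearMap.range (T ^ d).toLinearMap) := by
    haveI : FiniteDimensional ℂ ↥(LinearMap.ker T.toLinearMap ⊓ LinearMap.range (T ^ ka).toLinearMap) := hkaS
    exact Submodule.finiteDimensional_of_le (inf_le_inf_left _ (range_pow_le T hkale))
  have hdds : ∀ k, d ≤ k →
      FiniteDimensional ℂ (X ⧸ (LinearMap.range T.toLinearMap ⊔ LinearMap.ker (T ^ k).toLinearMap)) := by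
    intro k hk
    haveI : FiniteDimensional ℂ (X ⧸ (LinearMap.range T.toLinearMap ⊔ LinearMap.ker (T ^ kd).toLinearMap)) := hkdS
    exact fd_quot_mono (sup_le_sup_left (ker_pow_le T (le_trans hkdle hk)) _)
  have ha_min : ∀ m, m < d →
      ¬ FiniteDimensional ℂ ↥(LinearMap.ker T.toLinearMap ⊓ LinearMap.range (T ^ m).toLinearMap) := by
    intro m hm hfd
    have := haLB m hfd
    omega
  -- B-Fredholm data
  obtain ⟨n, hncl, hnF⟩ := hT
  have hdn : d ≤ n := by
    refine haLB n ?_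
    show FiniteDimensional ℂ ↥(LinearMap.ker T.toLinearMap ⊓ LinearMap.range (T ^ n).toLinearMap)
    haveI := hnF.1
    let f : ↥(LinearMap.ker T.toLinearMap ⊓ LinearMap.range (T ^ n).toLinearMap) →ₗ[ℂ]
        ↥(LinearMap.ker (restrictCLM T (LinearMap.range (T ^ n).toLinearMap) (range_pow_invariant T n)).toLinearMap) :=
      { toFun := fun x => ⟨⟨(x : X), x.2.2⟩, Subtype.ext (x.2.1 : T (x : X) = 0)⟩
        map_add' := fun a b => rfl
        map_smul' := fun c a => rfl }
    refine FiniteDimensional.of_injective f (fun a b hab => ?_)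
    apply Subtype.ext
    exact congrArg (fun z : ↥(LinearMap.ker (restrictCLM T (LinearMap.range (T ^ n).toLinearMap)
      (range_pow_invariant T n)).toLinearMap) => ((z : ↥(LinearMap.range (T ^ n).toLinearMap)) : X)) hab
  -- the range of T ^ d is closed
  obtain ⟨F, hFfd, hFle⟩ := range_chain T d hdds n hdn
  haveI := hFfd
  have hMeq : LinearMap.range (T ^ d).toLinearMap
      = LinearMap.range (T ^ n).toLinearMap ⊔ (F ⊓ LinearMap.range (T ^ d).toLinearMap) := by
    have h1 : LinearMap.range (T ^ n).toLinearMap ≤ LinearMap.range (T ^ d).toLinearMap := range_pow_le T hdn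
    have h2 := sup_inf_assoc_of_le F h1
    rw [← h2]
    exact (inf_eq_right.2 hFle).symm
  have hMcl : IsClosed ((LinearMap.range (T ^ d).toLinearMap : Submodule ℂ X) : Set X) := by
    rw [hMeq]
    haveI : FiniteDimensional ℂ ↥(F ⊓ LinearMap.range (T ^ d).toLinearMap) :=
      Submodule.finiteDimensional_of_le inf_le_left
    exact isClosed_sup_fd hncl
  set M : Submodule ℂ X := LinearMap.range (T ^ d).toLinearMap with hM
  set T₀ : M →L[ℂ] M := restrictCLM T M (range_pow_invariant T d) with hT₀
  set π : X →L[ℂ] M := (T ^ d).codRestrict M (fun x => LinearMap.mem_range_self _ x) with hπ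
  haveI : CompleteSpace M := hMcl.completeSpace_coe
  -- the kernel of T₀ is finite dimensional
  haveI hkerT0fd : FiniteDimensional ℂ ↥(LinearMap.ker T₀.toLinearMap) := by
    let f : ↥(LinearMap.ker T₀.toLinearMap) →ₗ[ℂ] ↥(LinearMap.ker T.toLinearMap ⊓ M) :=
      { toFun := fun x => ⟨((x : M) : X),
          ⟨(congrArg Subtype.val (x.2 : T₀ (x : M) = 0) : T ((x : M) : X) = 0), (x : M).2⟩⟩
        map_add' := fun a b => rfl
        map_smul' := fun c a => rfl }
    refine FiniteDimensional.of_injective f (fun a b hab => ?_)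
    apply Subtype.ext
    apply Subtype.ext
    exact congrArg (fun z : ↥(LinearMap.ker T.toLinearMap ⊓ M) => (z : X)) hab
  -- the range of T₀ has finite codimension in M
  haveI := hdds d le_rfl
  obtain ⟨F0, hF0fd, hF0le⟩ := range_step T d
  haveI := hF0fd
  set G' : Submodule ℂ M := Submodule.comap M.subtype F0 with hG'
  haveI hG'fd : FiniteDimensional ℂ G' := by
    let f : ↥G' →ₗ[ℂ] ↥F0 :=
      { toFun := fun x => ⟨((x : M) : X), x.2⟩
        map_add' := fun a b => rfl
        map_smul' := fun c a => rfl }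
    refine FiniteDimensional.of_injective f (fun a b hab => ?_)
    apply Subtype.ext
    apply Subtype.ext
    exact congrArg (fun z : ↥F0 => (z : X)) hab
  have htop : LinearMap.range (T₀ : M →ₗ[ℂ] M) ⊔ G' = ⊤ := by
    rw [eq_top_iff]
    rintro z -
    have hz : (z : X) ∈ LinearMap.range (T ^ (d + 1)).toLinearMap ⊔ F0 := hF0le z.2
    obtain ⟨u, hu, w, hw, huw⟩ := Submodule.mem_sup.1 hz
    obtain ⟨y, rfl⟩ := hu
    have huM : (T ^ (d + 1)) y ∈ M := range_pow_le T (Nat.le_succ d)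
      (LinearMap.mem_range_self _ y)
    have hwM : w ∈ M := by
      have hweq : w = (z : X) - (T ^ (d + 1)) y := by rw [← huw, ContinuousLinearMap.coe_coe]; abel
      rw [hweq]
      exact Submodule.sub_mem M z.2 huM
    refine Submodule.mem_sup.2 ⟨⟨(T ^ (d + 1)) y, huM⟩, ?_, ⟨w, hwM⟩, hw, ?_⟩
    · refine ⟨⟨(T ^ d) y, LinearMap.mem_range_self _ y⟩, ?_⟩
      apply Subtype.ext
      show T ((T ^ d) y) = (T ^ (d + 1)) y
      rw [← ContinuousLinearMap.mul_apply, ← pow_succ']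
    · apply Subtype.ext
      exact huw
  haveI hquotfd : FiniteDimensional ℂ (M ⧸ LinearMap.range (T₀ : M →ₗ[ℂ] M)) := by
    have hsurj : Function.Surjective
        ((LinearMap.range (T₀ : M →ₗ[ℂ] M)).mkQ ∘ₗ G'.subtype) := by
      intro q
      obtain ⟨z, rfl⟩ := (LinearMap.range (T₀ : M →ₗ[ℂ] M)).mkQ_surjective q
      have hz : z ∈ LinearMap.range (T₀ : M →ₗ[ℂ] M) ⊔ G' := htop ▸ Submodule.mem_top
      obtain ⟨r, hr, g, hg, hrg⟩ := Submodule.mem_sup.1 hz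
      refine ⟨⟨g, hg⟩, ?_⟩
      show (LinearMap.range (T₀ : M →ₗ[ℂ] M)).mkQ g
        = (LinearMap.range (T₀ : M →ₗ[ℂ] M)).mkQ z
      rw [Submodule.mkQ_apply, Submodule.mkQ_apply, Submodule.Quotient.eq]
      have : g - z = -r := by rw [← hrg]; abel
      rw [this]
      exact Submodule.neg_mem _ hr
    exact Module.Finite.of_surjective _ hsurj
  obtain ⟨Gc, hGc⟩ := Submodule.exists_isCompl (LinearMap.range (T₀ : M →ₗ[ℂ] M))
  haveI : FiniteDimensional ℂ Gc :=
    LinearEquiv.finiteDimensional (Submodule.quotientEquivOfIsCompl _ Gc hGc)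
  have hR0cl := isClosed_range_of_fd_compl T₀ hGc
  obtain ⟨B, hAB, hBA⟩ := exists_pseudoinverse T₀ hGc hR0cl
  -- pass to the Calkin algebra of M
  have hβ1 : calkinMk ↥M T₀ * calkinMk ↥M B = 1 := by
    have h0 : calkinMk ↥M (1 - T₀ * B) = 0 := (calkinMk_eq_zero_iff ↥M).2 hAB
    rw [map_sub, map_one, map_mul, sub_eq_zero] at h0
    exact h0.symm
  have hβ2 : calkinMk ↥M B * calkinMk ↥M T₀ = 1 := by
    have h0 : calkinMk ↥M (1 - B * T₀) = 0 := (calkinMk_eq_zero_iff ↥M).2 hBA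
    rw [map_sub, map_one, map_mul, sub_eq_zero] at h0
    exact h0.symm
  have hred1 : IsCompactOperator ⇑(T₀ * B ^ (d + 1) - B ^ (d + 1) * T₀) := by
    refine (calkinMk_eq_zero_iff ↥M).1 ?_
    simp only [map_sub, map_mul, map_pow]
    have e1 : calkinMk ↥M T₀ * (calkinMk ↥M B) ^ (d + 1) = (calkinMk ↥M B) ^ d := by
      rw [pow_succ' (calkinMk ↥M B) d, ← mul_assoc, hβ1, one_mul]
    have e2 : (calkinMk ↥M B) ^ (d + 1) * calkinMk ↥M T₀ = (calkinMk ↥M B) ^ d := by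
      rw [pow_succ (calkinMk ↥M B) d, mul_assoc, hβ2, mul_one]
    rw [e1, e2, sub_self]
  have hred2 : IsCompactOperator ⇑(T₀ ^ (d + 1) * B ^ (d + 1) - 1) := by
    refine (calkinMk_eq_zero_iff ↥M).1 ?_
    simp only [map_sub, map_mul, map_one, map_pow]
    have key : ∀ k : ℕ, (calkinMk ↥M T₀) ^ k * (calkinMk ↥M B) ^ k = 1 := by
      intro k
      induction k with
      | zero => simp
      | succ k ih =>
          calc (calkinMk ↥M T₀) ^ (k + 1) * (calkinMk ↥M B) ^ (k + 1)
              = ((calkinMk ↥M T₀) ^ k * calkinMk ↥M T₀)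
                * (calkinMk ↥M B * (calkinMk ↥M B) ^ k) := by
                rw [pow_succ (calkinMk ↥M T₀) k, pow_succ' (calkinMk ↥M B) k]
            _ = (calkinMk ↥M T₀) ^ k
                * ((calkinMk ↥M T₀ * calkinMk ↥M B) * (calkinMk ↥M B) ^ k) := by
                rw [mul_assoc, mul_assoc]
            _ = (calkinMk ↥M T₀) ^ k * (calkinMk ↥M B) ^ k := by rw [hβ1, one_mul]
            _ = 1 := ih
    rw [key (d + 1), sub_self]
  -- transfer to X
  set S₁ : X →L[ℂ] X := M.subtypeL.comp ((B ^ (d + 1)).comp π) with hS₁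
  have hπT : ∀ x : X, π (T x) = T₀ (π x) := by
    intro x
    apply Subtype.ext
    show (T ^ d) (T x) = T ((T ^ d) x)
    rw [← ContinuousLinearMap.mul_apply, ← pow_succ, pow_succ', ContinuousLinearMap.mul_apply]
  have hTpowι : ∀ (k : ℕ) (z : M), (T ^ k) ((z : X)) = (((T₀ ^ k) z : M) : X) :=
    fun k z => (restrictCLM_pow_apply T M (range_pow_invariant T d) k z).symm
  have hc_comm : IsCompactOperator ⇑(T * S₁ - S₁ * T) := by
    have heq : T * S₁ - S₁ * T
        = M.subtypeL.comp ((T₀ * B ^ (d + 1) - B ^ (d + 1) * T₀).comp π) := by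
      ext x
      show T (S₁ x) - S₁ (T x) = ((T₀ * B ^ (d + 1) - B ^ (d + 1) * T₀) (π x) : X)
      have l1 : T (S₁ x) = ((T₀ ((B ^ (d + 1)) (π x)) : M) : X) := by
        have := hTpowι 1 ((B ^ (d + 1)) (π x))
        simp only [pow_one] at this; exact this
      have l2 : S₁ (T x) = (((B ^ (d + 1)) (T₀ (π x)) : M) : X) := by
        show (((B ^ (d + 1)) (π (T x)) : M) : X) = _
        rw [hπT]
      rw [l1, l2, ContinuousLinearMap.sub_apply, ContinuousLinearMap.mul_apply,
        ContinuousLinearMap.mul_apply, Submodule.coe_sub]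
    rw [heq]
    exact isCompactOperator_sandwich hred1 M.subtypeL π
  have hc_pow : IsCompactOperator ⇑(T ^ (d + 1) * S₁ - T ^ d) := by
    have heq : T ^ (d + 1) * S₁ - T ^ d
        = M.subtypeL.comp ((T₀ ^ (d + 1) * B ^ (d + 1) - 1).comp π) := by
      ext x
      show (T ^ (d + 1)) (S₁ x) - (T ^ d) x
        = ((T₀ ^ (d + 1) * B ^ (d + 1) - 1) (π x) : X)
      have l1 : (T ^ (d + 1)) (S₁ x) = (((T₀ ^ (d + 1)) ((B ^ (d + 1)) (π x)) : M) : X) :=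
        hTpowι (d + 1) _
      have l2 : (T ^ d) x = ((π x : M) : X) := rfl
      rw [l1, l2, ContinuousLinearMap.sub_apply, ContinuousLinearMap.mul_apply,
        ContinuousLinearMap.one_apply, Submodule.coe_sub]
    rw [heq]
    exact isCompactOperator_sandwich hred2 M.subtypeL π
  -- Drazin algebra in the Calkin algebra of X
  have h1c : calkinMk X T * calkinMk X S₁ = calkinMk X S₁ * calkinMk X T := by
    have h0 := (calkinMk_eq_zero_iff X).2 hc_comm
    rw [map_sub, map_mul, map_mul, sub_eq_zero] at h0
    exact h0
  have h2c : (calkinMk X T) ^ (d + 1) * calkinMk X S₁ = (calkinMk X T) ^ d := by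
    have h0 := (calkinMk_eq_zero_iff X).2 hc_pow
    simp only [map_sub, map_mul, map_pow] at h0
    rw [sub_eq_zero] at h0
    exact h0
  obtain ⟨hb1, hb2, hb3⟩ := drazin_core d h1c h2c
  have hDrazinAt : DrazinAt T d := by
    refine ⟨T ^ d * S₁ ^ (d + 1), ?_, ?_, ?_⟩
    · refine (calkinMk_eq_zero_iff X).1 ?_
      simp only [map_sub, map_mul, map_pow]
      rw [hb1, sub_self]
    · refine (calkinMk_eq_zero_iff X).1 ?_
      simp only [map_sub, map_mul, map_pow]
      rw [hb2, sub_self]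
    · refine (calkinMk_eq_zero_iff X).1 ?_
      simp only [map_sub, map_mul, map_pow]
      rw [hb3, sub_self]
  constructor
  · exact hDrazinAt
  -- lower bound
  · rintro m hm
    by_contra hlt
    push_neg at hlt
    have hd1 : 1 ≤ d := by omega
    have hcl' : IsClosed ((LinearMap.range (T ^ (d - 1)).toLinearMap : Submodule ℂ X) : Set X) := by
      rcases hclosed with h0 | h
      · omega
      · exact h
    obtain ⟨Sop, hc1, hc2, hc3⟩ := hm
    set D : X →L[ℂ] X := T ^ m - Sop * T ^ (m + 1) with hD
    have hDc : IsCompactOperator ⇑D := by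
      refine (calkinMk_eq_zero_iff X).1 ?_
      have hcomm : calkinMk X T * calkinMk X Sop = calkinMk X Sop * calkinMk X T := by
        have h0 := (calkinMk_eq_zero_iff X).2 hc1
        rw [map_sub, map_mul, map_mul, sub_eq_zero] at h0
        exact h0
      have hpow : (calkinMk X T) ^ (m + 1) * calkinMk X Sop = (calkinMk X T) ^ m := by
        have h0 := (calkinMk_eq_zero_iff X).2 hc3
        rw [map_sub, map_mul, map_pow, map_pow, sub_eq_zero] at h0
        exact h0
      rw [hD]
      simp only [map_sub, map_mul, map_pow]
      have hcsw : calkinMk X Sop * (calkinMk X T) ^ (m + 1)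
          = (calkinMk X T) ^ (m + 1) * calkinMk X Sop :=
        ((Commute.symm (hcomm : Commute (calkinMk X T) (calkinMk X Sop))).pow_right (m + 1)).eq
      rw [hcsw, hpow, sub_self]
    set V' : Submodule ℂ X := LinearMap.ker T.toLinearMap ⊓ LinearMap.range (T ^ (d - 1)).toLinearMap with hV'
    have hV'cl : IsClosed ((V' : Submodule ℂ X) : Set X) := by
      have hset : ((V' : Submodule ℂ X) : Set X)
          = ((LinearMap.ker T.toLinearMap : Submodule ℂ X) : Set X)
            ∩ ((LinearMap.range (T ^ (d - 1)).toLinearMap : Submodule ℂ X) : Set X) := rfl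
      rw [hset]
      exact (ContinuousLinearMap.isClosed_ker T).inter hcl'
    set W : Submodule ℂ X := LinearMap.ker (T ^ (m + 1)).toLinearMap with hW
    set Z : Submodule ℂ X := W ⊓ Submodule.comap D.toLinearMap V' with hZ
    have hZcl : IsClosed ((Z : Submodule ℂ X) : Set X) := by
      have hset : ((Z : Submodule ℂ X) : Set X)
          = ((W : Submodule ℂ X) : Set X) ∩ (⇑D ⁻¹' (V' : Set X)) := rfl
      rw [hset]
      exact (ContinuousLinearMap.isClosed_ker (T ^ (m + 1))).inter (hV'cl.preimage D.continuous)
    haveI : CompleteSpace Z := hZcl.completeSpace_coe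
    haveI : CompleteSpace V' := hV'cl.completeSpace_coe
    set Φ : Z →L[ℂ] V' := (D.comp Z.subtypeL).codRestrict V' (fun z => z.2.2) with hΦ
    have hΦval : ∀ z : Z, ((Φ z : V') : X) = D ((z : Z) : X) := fun z => rfl
    have hΦsurj : Function.Surjective Φ := by
      rintro ⟨x, hx⟩
      have hxk : T x = 0 := hx.1
      obtain ⟨zz, hzz⟩ := hx.2
      have hmd : m ≤ d - 1 := by omega
      obtain ⟨y, hy⟩ : ∃ y : X, y = (T ^ (d - 1 - m)) zz := ⟨_, rfl⟩
      have hTm : (T ^ m) y = x := by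
        rw [hy, ← ContinuousLinearMap.mul_apply, ← pow_add,
          show m + (d - 1 - m) = d - 1 from by omega]
        exact hzz
      have hyW : y ∈ W := by
        show (T ^ (m + 1)) y = 0
        have e1 : (T ^ (m + 1)) y = T ((T ^ m) y) := by
          rw [← ContinuousLinearMap.mul_apply, ← pow_succ']
        rw [e1, hTm, hxk]
      have hDy : D y = x := by
        rw [hD]
        show (T ^ m) y - (Sop * T ^ (m + 1)) y = x
        rw [ContinuousLinearMap.mul_apply, show (T ^ (m + 1)) y = 0 from hyW, map_zero,
          sub_zero, hTm]
      refine ⟨⟨y, ⟨hyW, ?_⟩⟩, ?_⟩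
      · show D y ∈ V'
        rw [hDy]
        exact hx
      · apply Subtype.ext
        show D y = x
        exact hDy
    have hopen := Φ.isOpenMap hΦsurj
    have h0mem : (0 : V') ∈ Φ '' Metric.ball (0 : Z) 1 :=
      ⟨0, Metric.mem_ball_self one_pos, map_zero Φ⟩
    obtain ⟨ε, hε, hball⟩ := Metric.isOpen_iff.1 (hopen _ Metric.isOpen_ball) 0 h0mem
    have hKcpt : IsCompact (closure (⇑D '' Metric.ball (0 : X) 1)) :=
      hDc.isCompact_closure_image_of_bounded Metric.isBounded_ball
    have hsubset : (Subtype.val '' (Metric.closedBall (0 : V') (ε / 2)))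
        ⊆ closure (⇑D '' Metric.ball (0 : X) 1) := by
      rintro _ ⟨v, hv, rfl⟩
      have hvball : v ∈ Metric.ball (0 : V') ε := by
        rw [Metric.mem_closedBall] at hv
        rw [Metric.mem_ball]
        have : (0:ℝ) < ε / 2 := by positivity
        linarith
      obtain ⟨z, hz, hzv⟩ := hball hvball
      refine subset_closure ⟨(z : X), ?_, ?_⟩
      · rw [Metric.mem_ball] at hz ⊢
        rw [show dist ((z : Z) : X) (0 : X) = dist z (0 : Z) from rfl]
        exact hz
      · rw [← hzv]
        rfl
    have hvalcb_closed : IsClosed (Subtype.val '' (Metric.closedBall (0 : V') (ε / 2))) := by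
      have hset : Subtype.val '' (Metric.closedBall (0 : V') (ε / 2))
          = ((V' : Submodule ℂ X) : Set X) ∩ Metric.closedBall (0 : X) (ε / 2) := by
        ext x
        constructor
        · rintro ⟨v, hv, rfl⟩
          refine ⟨v.2, ?_⟩
          rw [Metric.mem_closedBall] at hv ⊢
          rw [show dist ((v : V') : X) (0 : X) = dist v (0 : V') from rfl]
          exact hv
        · rintro ⟨hxV, hxB⟩
          refine ⟨⟨x, hxV⟩, ?_, rfl⟩
          rw [Metric.mem_closedBall] at hxB ⊢
          exact hxB
      rw [hset]
      exact hV'cl.inter Metric.isClosed_closedBall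
    have hcval : IsCompact (Subtype.val '' (Metric.closedBall (0 : V') (ε / 2))) :=
      hKcpt.of_isClosed_subset hvalcb_closed hsubset
    have hcb : IsCompact (Metric.closedBall (0 : V') (ε / 2)) := by
      rw [Topology.IsEmbedding.subtypeVal.isCompact_iff]
      exact hcval
    haveI hfdV' : FiniteDimensional ℂ V' :=
      FiniteDimensional.of_isCompact_closedBall₀ ℂ (by positivity) hcb
    exact ha_min (d - 1) (by omega) hfdV'
end
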